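/- Let g be a Lie triple system over a field F with char F ≠ 2, 3 and N : g → g a Nijenhuis operator. Define ω(x,y,z) := [Nx,y,z] + [x,Ny,z] + [x,y,Nz] − N[x,y,z]. Then for every λ ∈ F the bracket [x,y,z]_λ := [x,y,z] + λ·ω(x,y,z) makes g a Lie triple system, and φ_λ := id + λN is a homomorphism of Lie triple systems from (g, [·,·,·]_λ) to (g, [·,·,·]), i.e. φ_λ([x,y,z]_λ) = [φ_λ(x), φ_λ(y), φ_λ(z)] for all x,y,z ∈ g; thus the deformation generated by ω is trivial. -/
import Mathlib


/-- `N` is a Nijenhuis operator for the Lie triple system bracket `t`. -/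
def IsNijenhuis {F : Type*} [Field F] {g : Type*} [AddCommGroup g] [Module F g]
    (t : g →ₗ[F] g →ₗ[F] g →ₗ[F] g) (N : Module.End F g) : Prop :=
  (∀ x y z : g, t (N x) (N y) (N z) = 0) ∧
  (∀ x y z : g,
    N (N (t x y z)) =
      N (t (N x) y z) + N (t x (N y) z) + N (t x y (N z)) -
        t (N x) (N y) z - t (N x) y (N z) - t x (N y) (N z))

/- STATEMENT 6: a Nijenhuis operator N gives a deformation via
ω(x,y,z) = [Nx,y,z]+[x,Ny,z]+[x,y,Nz]−N[x,y,z]: for every λ the deformed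
bracket [·,·,·] + λ·ω is a Lie triple system bracket on g, and
φ_λ = id + λN is a homomorphism from the deformed structure to the original one,
so the deformation is trivial. -/
set_option maxHeartbeats 4000000 in
theorem nijenhuis_gives_trivial_deformation {F : Type*} [Field F]
    (hchar2 : (2 : F) ≠ 0) (hchar3 : (3 : F) ≠ 0)
    {g : Type*} [AddCommGroup g] [Module F g]
    (t : g →ₗ[F] g →ₗ[F] g →ₗ[F] g)
    (hskew : ∀ x y : g, t x x y = 0)
    (hjac : ∀ x y z : g, t x y z + t y z x + t z x y = 0)
    (hfund : ∀ x y a b c : g,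
      t x y (t a b c) = t (t x y a) b c + t a (t x y b) c + t a b (t x y c))
    (N : Module.End F g) (hN : IsNijenhuis t N)
    (ω : g → g → g → g)
    (hω : ∀ x y z : g,
      ω x y z = t (N x) y z + t x (N y) z + t x y (N z) - N (t x y z)) :
    ∀ (lam : F) (b : g → g → g → g),
      (∀ x y z : g, b x y z = t x y z + lam • ω x y z) →
      ((∀ x y : g, b x x y = 0) ∧
       (∀ x y z : g, b x y z + b y z x + b z x y = 0) ∧
       (∀ x1 x2 y1 y2 y3 : g,
         b x1 x2 (b y1 y2 y3) =
           b (b x1 x2 y1) y2 y3 + b y1 (b x1 x2 y2) y3 + b y1 y2 (b x1 x2 y3)) ∧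
       -- φ_λ = id + λN is a homomorphism from (g, b) to (g, [·,·,·]):
       (∀ x y z : g,
         b x y z + lam • N (b x y z) =
           t (x + lam • N x) (y + lam • N y) (z + lam • N z))) := by
  intro lam b hb
  have hanti : ∀ p q r : g, t p q r = - t q p r := by
    intro p q r
    have h := hskew (p + q) r
    have h1 := hskew p r
    have h2 := hskew q r
    simp only [map_add, LinearMap.add_apply] at h
    linear_combination (norm := module) h - h1 - h2
  refine ⟨?_, ?_, ?_, ?_⟩
  · -- b x x y = 0
    intro x y
    rw [hb, hω]
    have h1 := hskew x y
    have h2 := hskew x (N y)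
    have h3 := hanti (N x) x y
    have h4 : N (t x x y) = 0 := by rw [h1, map_zero]
    linear_combination (norm := module) h1 + lam • h2 + lam • h3 - lam • h4
  · -- cyclic identity
    intro x y z
    simp only [hb, hω]
    have h5 : N (t x y z) + N (t y z x) + N (t z x y) = 0 := by
      have h := congrArg N (hjac x y z)
      simpa only [map_add, map_zero] using h
    linear_combination (norm := module) hjac x y z +
      lam • (hjac (N x) y z + hjac x (N y) z + hjac x y (N z)) - lam • h5
  · -- fundamental identity for the deformed bracket
    intro x1 x2 y1 y2 y3
    have hf1 : ∀ p q r s u : g,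
        N (t p q (t r s u)) =
          N (t (t p q r) s u) + N (t r (t p q s) u) + N (t r s (t p q u)) := by
      intro p q r s u
      rw [hfund p q r s u, map_add, map_add]
    have hf2 : ∀ p q r s u : g,
        N (N (t p q (t r s u))) =
          N (N (t (t p q r) s u)) + N (N (t r (t p q s) u)) +
            N (N (t r s (t p q u))) := by
      intro p q r s u
      rw [hf1 p q r s u, map_add, map_add]
    have hw0 : ∀ p q r s u : g,
        t (N (N (t p q r))) s u =
          t (N (t (N p) q r)) s u + t (N (t p (N q) r)) s u +
            t (N (t p q (N r))) s u -
          t (t (N p) (N q) r) s u - t (t (N p) q (N r)) s u -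
            t (t p (N q) (N r)) s u := by
      intro p q r s u
      rw [hN.2 p q r]
      simp only [map_add, map_sub, LinearMap.add_apply, LinearMap.sub_apply]
    have hw1 : ∀ s p q r u : g,
        t s (N (N (t p q r))) u =
          t s (N (t (N p) q r)) u + t s (N (t p (N q) r)) u +
            t s (N (t p q (N r))) u -
          t s (t (N p) (N q) r) u - t s (t (N p) q (N r)) u -
            t s (t p (N q) (N r)) u := by
      intro s p q r u
      rw [hN.2 p q r]
      simp only [map_add, map_sub, LinearMap.add_apply, LinearMap.sub_apply]
    have hw2 : ∀ s u p q r : g,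
        t s u (N (N (t p q r))) =
          t s u (N (t (N p) q r)) + t s u (N (t p (N q) r)) +
            t s u (N (t p q (N r))) -
          t s u (t (N p) (N q) r) - t s u (t (N p) q (N r)) -
            t s u (t p (N q) (N r)) := by
      intro s u p q r
      rw [hN.2 p q r]
      simp only [map_add, map_sub, LinearMap.add_apply, LinearMap.sub_apply]
    simp only [hb, hω]
    simp only [map_add, map_smul, map_sub, LinearMap.add_apply,
      LinearMap.smul_apply, LinearMap.sub_apply]
    linear_combination (norm := module)
      hfund x1 x2 y1 y2 y3 +
      lam • (- hf1 x1 x2 y1 y2 y3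
        + hfund x1 x2 y1 y2 (N y3)
        + hfund x1 x2 y1 (N y2) y3
        + hfund x1 x2 (N y1) y2 y3
        + hfund x1 (N x2) y1 y2 y3
        + hfund (N x1) x2 y1 y2 y3) +
      (lam ^ 2) • (hf2 x1 x2 y1 y2 y3
        - hf1 x1 x2 y1 y2 (N y3)
        - hf1 x1 x2 y1 (N y2) y3
        + hfund x1 x2 y1 (N y2) (N y3)
        - hf1 x1 x2 (N y1) y2 y3
        + hfund x1 x2 (N y1) y2 (N y3)
        + hfund x1 x2 (N y1) (N y2) y3
        - hf1 x1 (N x2) y1 y2 y3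
        + hfund x1 (N x2) y1 y2 (N y3)
        + hfund x1 (N x2) y1 (N y2) y3
        + hfund x1 (N x2) (N y1) y2 y3
        - hf1 (N x1) x2 y1 y2 y3
        + hfund (N x1) x2 y1 y2 (N y3)
        + hfund (N x1) x2 y1 (N y2) y3
        + hfund (N x1) x2 (N y1) y2 y3
        + hfund (N x1) (N x2) y1 y2 y3
        - hN.2 x1 x2 (t y1 y2 y3)
        + hN.2 (t x1 x2 y1) y2 y3
        + hN.2 y1 (t x1 x2 y2) y3
        + hN.2 y1 y2 (t x1 x2 y3)
        + hw0 x1 x2 y1 y2 y3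
        + hw1 y1 x1 x2 y2 y3
        + hw2 y1 y2 x1 x2 y3
        - hw2 x1 x2 y1 y2 y3)
  · -- φ_λ is a homomorphism
    intro x y z
    rw [hb, hω]
    simp only [map_add, map_smul, map_sub, LinearMap.add_apply,
      LinearMap.smul_apply, LinearMap.sub_apply]
    linear_combination (norm := module)
      (-(lam ^ 2)) • hN.2 x y z - (lam ^ 3) • hN.1 x y z
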